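/- Let G be a totally disconnected locally compact group. Then for any two compact open subgroups U, V of G, the subgroups [A](U) and [A](V) are commensurate. -/

import Mathlib

open Pointwise
set_option linter.unusedSectionVars false
set_option linter.unusedVariables false


section Aux
variable {G : Type*} [Group G]

/-- set of products of a finite family of subgroups -/
def AProdSet (n : ℕ) (V : Fin n → Subgroup G) : Set G :=
  {x : G | ∃ f : Fin n → G, (∀ i, f i ∈ V i) ∧ x = (List.ofFn f).prod}

lemma AProdSet_zero (V : Fin 0 → Subgroup G) : AProdSet 0 V = {1} := by
  ext x; simp [AProdSet]

lemma AProdSet_succ (n : ℕ) (V : Fin (n+1) → Subgroup G) :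
    AProdSet (n+1) V = (V 0 : Set G) * AProdSet n (V ∘ Fin.succ) := by
  ext x
  constructor
  · rintro ⟨f, hf, rfl⟩
    refine ⟨f 0, hf 0, (List.ofFn (f ∘ Fin.succ)).prod, ⟨f ∘ Fin.succ, fun i => hf i.succ, rfl⟩, ?_⟩
    rw [List.ofFn_succ]; rfl
  · rintro ⟨v, hv, y, ⟨g, hg, rfl⟩, rfl⟩
    refine ⟨Fin.cons v g, ?_, ?_⟩
    · intro i
      refine Fin.cases ?_ ?_ i
      · simpa using hv
      · intro j; simpa using hg j
    · rw [List.ofFn_succ]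
      simp [Fin.cons, Function.comp]

lemma map_conj_le {g : G} {H K : Subgroup G} (h : ∀ x ∈ H, g * x * g⁻¹ ∈ K) :
    H.map (MulAut.conj g).toMonoidHom ≤ K := by
  rintro x ⟨v, hv, rfl⟩
  simpa [MulAut.conj_apply] using h v hv

lemma normalizes_of_map_le {g : G} {H K : Subgroup G}
    (h : H.map (MulAut.conj g).toMonoidHom ≤ K) :
    ∀ x ∈ H, g * x * g⁻¹ ∈ K := fun x hx => h ⟨x, hx, by simp [MulAut.conj_apply]⟩

lemma sup_coe_of_normalizes (H K : Subgroup G) (h : ∀ x ∈ H, ∀ k ∈ K, x * k * x⁻¹ ∈ K) :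
    ((H ⊔ K : Subgroup G) : Set G) = (H : Set G) * (K : Set G) := by
  have h' : ∀ x ∈ H, ∀ k ∈ K, x⁻¹ * k * x ∈ K := fun x hx k hk => by
    simpa using h x⁻¹ (H.inv_mem hx) k hk
  let S : Subgroup G :=
    { carrier := (H : Set G) * (K : Set G)
      one_mem' := ⟨1, H.one_mem, 1, K.one_mem, by simp⟩
      mul_mem' := by
        rintro a b ⟨h₁, hh₁, k₁, hk₁, rfl⟩ ⟨h₂, hh₂, k₂, hk₂, rfl⟩
        exact ⟨h₁ * h₂, H.mul_mem hh₁ hh₂, (h₂⁻¹ * k₁ * h₂) * k₂,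
          K.mul_mem (h' h₂ hh₂ k₁ hk₁) hk₂, by group⟩
      inv_mem' := by
        rintro a ⟨h₁, hh₁, k₁, hk₁, rfl⟩
        exact ⟨h₁⁻¹, H.inv_mem hh₁, h₁ * k₁⁻¹ * h₁⁻¹, h h₁ hh₁ _ (K.inv_mem hk₁), by group⟩ }
  have hS : H ⊔ K = S := by
    apply le_antisymm
    · exact sup_le (fun x hx => ⟨x, hx, 1, K.one_mem, by simp⟩)
        (fun k hk => ⟨1, H.one_mem, k, hk, by simp⟩)
    · rintro x ⟨h₁, hh₁, k₁, hk₁, rfl⟩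
      exact Subgroup.mul_mem _ (le_sup_left (α := Subgroup G) hh₁)
        (le_sup_right (α := Subgroup G) hk₁)
  rw [hS]; rfl

lemma iSup_normalizes {N : Subgroup G} {ι : Sort*} {V : ι → Subgroup G}
    (h : ∀ i, ∀ g ∈ N, ∀ v ∈ V i, g * v * g⁻¹ ∈ V i) :
    ∀ g ∈ N, ∀ v ∈ ⨆ i, V i, g * v * g⁻¹ ∈ ⨆ i, V i := by
  intro g hg
  apply normalizes_of_map_le
  rw [Subgroup.map_iSup]
  exact iSup_le fun i => le_trans (map_conj_le (h i g hg)) (le_iSup V i)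

lemma AProdSet_eq_sup (N : Subgroup G) : ∀ (n : ℕ) (V : Fin n → Subgroup G),
    (∀ i, V i ≤ N) → (∀ i, ∀ g ∈ N, ∀ v ∈ V i, g * v * g⁻¹ ∈ V i) →
    AProdSet n V = ((⨆ i, V i : Subgroup G) : Set G)
  | 0, V, _, _ => by
      rw [AProdSet_zero, iSup_of_empty]; simp
  | (n+1), V, hle, hnorm => by
      have tail := AProdSet_eq_sup N n (V ∘ Fin.succ) (fun i => hle _) (fun i => hnorm _)
      rw [AProdSet_succ, tail]
      have hsup : (⨆ i, V i) = V 0 ⊔ ⨆ i : Fin n, (V ∘ Fin.succ) i := by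
        apply le_antisymm
        · refine iSup_le fun i => ?_
          refine Fin.cases le_sup_left (fun j => ?_) i
          exact le_trans (le_iSup (fun i : Fin n => (V ∘ Fin.succ) i) j) le_sup_right
        · exact sup_le (le_iSup V 0) (iSup_le fun j => le_iSup V j.succ)
      rw [hsup, sup_coe_of_normalizes]
      intro x hx k hk
      exact iSup_normalizes (fun i => hnorm i.succ) x (hle 0 hx) k hk

end Aux

section AuxTop
variable {G : Type*} [Group G] [TopologicalSpace G] [IsTopologicalGroup G]

lemma AProdSet_isCompact : ∀ (n : ℕ) (V : Fin n → Subgroup G),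
    (∀ i, IsCompact (V i : Set G)) → IsCompact (AProdSet n V)
  | 0, V, _ => by rw [AProdSet_zero]; exact isCompact_singleton
  | (n+1), V, h => by
      rw [AProdSet_succ]
      exact (h 0).mul (AProdSet_isCompact n _ fun i => h i.succ)

end AuxTop

/-- `P` behaves like membership in the class `[A]` for closed subgroups of `G`:
conjugation invariant, closed under closed normal subgroups, and closed under finite
products of normal `P`-subgroups. -/
structure IsAClassOn (G : Type*) [Group G] [TopologicalSpace G]
    (P : Subgroup G → Prop) : Prop where
  conj : ∀ L : Subgroup G, P L → ∀ g : G, P (L.map (MulAut.conj g).toMonoidHom)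
  normal_sub : ∀ L : Subgroup G, P L → ∀ M : Subgroup G, IsClosed (M : Set G) → M ≤ L →
    (∀ l ∈ L, ∀ m ∈ M, l * m * l⁻¹ ∈ M) → P M
  prod : ∀ (W : Subgroup G) (n : ℕ) (V : Fin n → Subgroup G),
    (∀ i, P (V i)) → (∀ i, V i ≤ W) →
    (∀ i, ∀ w ∈ W, ∀ v ∈ V i, w * v * w⁻¹ ∈ V i) →
    ((W : Set G) = {x : G | ∃ f : Fin n → G, (∀ i, f i ∈ V i) ∧ x = (List.ofFn f).prod}) →
    P W

/-- `[A](U)`: the closed subgroup of `U` generated by all closed normal `P`-subgroups of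
`U`. -/
noncomputable def AClosure {G : Type*} [Group G] [TopologicalSpace G] [IsTopologicalGroup G]
    (P : Subgroup G → Prop) (U : Subgroup G) : Subgroup G :=
  (sSup {A : Subgroup G | A ≤ U ∧ IsClosed (A : Set G) ∧ P A ∧
    ∀ u ∈ U, ∀ a ∈ A, u * a * u⁻¹ ∈ A}).topologicalClosure


section Gens
variable {G : Type*} [Group G] [TopologicalSpace G] [IsTopologicalGroup G]

def AGens (P : Subgroup G → Prop) (U : Subgroup G) : Set (Subgroup G) :=
  {A : Subgroup G | A ≤ U ∧ IsClosed (A : Set G) ∧ P A ∧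
    ∀ u ∈ U, ∀ a ∈ A, u * a * u⁻¹ ∈ A}

lemma aClosure_def (P : Subgroup G → Prop) (U : Subgroup G) :
    AClosure P U = (sSup (AGens P U)).topologicalClosure := rfl

variable {P : Subgroup G → Prop}

lemma IsAClassOn.bot (hP : IsAClassOn G P) : P ⊥ := by
  apply hP.prod ⊥ 0 (fun _ => ⊥) (fun i => i.elim0) (fun i => i.elim0) (fun i => i.elim0)
  ext x
  constructor
  · intro hx
    exact ⟨fun i => i.elim0, fun i => i.elim0, by simpa using hx⟩
  · rintro ⟨f, -, rfl⟩
    simp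

lemma bot_mem_AGens [T2Space G] (hP : IsAClassOn G P) (U : Subgroup G) : ⊥ ∈ AGens P U := by
  refine ⟨bot_le, ?_, hP.bot, ?_⟩
  · have : ((⊥ : Subgroup G) : Set G) = {1} := by ext x; simp
    rw [this]; exact isClosed_singleton
  · intro u hu a ha
    simp only [Subgroup.mem_bot] at ha ⊢
    simp [ha]

lemma sup_mem_AGens [T2Space G] (hP : IsAClassOn G P) {U A B : Subgroup G}
    (hUc : IsCompact (U : Set G)) (hA : A ∈ AGens P U) (hB : B ∈ AGens P U) :
    A ⊔ B ∈ AGens P U := by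
  obtain ⟨hAU, hAcl, hAP, hAn⟩ := hA
  obtain ⟨hBU, hBcl, hBP, hBn⟩ := hB
  set V : Fin 2 → Subgroup G := ![A, B] with hV
  have hV0 : V 0 = A := rfl
  have hV1 : V 1 = B := rfl
  have hVle : ∀ i, V i ≤ U := by intro i; fin_cases i; exacts [hAU, hBU]
  have hVnorm : ∀ i, ∀ g ∈ U, ∀ v ∈ V i, g * v * g⁻¹ ∈ V i := by
    intro i; fin_cases i; exacts [hAn, hBn]
  have hsup : (⨆ i, V i) = A ⊔ B := by
    apply le_antisymm
    · refine iSup_le fun i => ?_; fin_cases i; exacts [le_sup_left, le_sup_right]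
    · exact sup_le (hV0 ▸ le_iSup V 0) (hV1 ▸ le_iSup V 1)
  have hset : ((A ⊔ B : Subgroup G) : Set G) = AProdSet 2 V := by
    rw [AProdSet_eq_sup U 2 V hVle hVnorm, hsup]
  have hcomp : ∀ i, IsCompact (V i : Set G) := by
    intro i; fin_cases i
    · exact hUc.of_isClosed_subset hAcl fun x hx => hAU hx
    · exact hUc.of_isClosed_subset hBcl fun x hx => hBU hx
  refine ⟨sup_le hAU hBU, ?_, ?_, ?_⟩
  · rw [hset]; exact (AProdSet_isCompact 2 V hcomp).isClosed
  · refine hP.prod (A ⊔ B) 2 V (by intro i; fin_cases i; exacts [hAP, hBP])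
      (by intro i; fin_cases i; exacts [le_sup_left, le_sup_right])
      (fun i w hw v hv => hVnorm i w (sup_le hAU hBU hw) v hv) hset
  · intro u hu
    apply normalizes_of_map_le
    rw [Subgroup.map_sup]
    exact sup_le (le_trans (map_conj_le (hAn u hu)) le_sup_left)
      (le_trans (map_conj_le (hBn u hu)) le_sup_right)

lemma mem_sSup_AGens [T2Space G] (hP : IsAClassOn G P) {U : Subgroup G}
    (hUc : IsCompact (U : Set G)) {x : G} :
    x ∈ sSup (AGens P U) ↔ ∃ A ∈ AGens P U, x ∈ A :=
  Subgroup.mem_sSup_of_directedOn ⟨⊥, bot_mem_AGens hP U⟩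
    (fun A hA B hB => ⟨A ⊔ B, sup_mem_AGens hP hUc hA hB, le_sup_left, le_sup_right⟩)

end Gens


section Main
variable {G : Type*} [Group G] [TopologicalSpace G] [IsTopologicalGroup G]
variable {P : Subgroup G → Prop}

lemma conj_hom_mul (g h : G) : (MulAut.conj (g * h)).toMonoidHom
    = ((MulAut.conj g).toMonoidHom).comp (MulAut.conj h).toMonoidHom := by
  ext x; simp [MulAut.conj_apply, mul_assoc]

/-- covering a compact subgroup by finitely many cosets of an open subgroup,
recorded as a tuple of representatives beginning with `1`. -/
lemma exists_coset_reps {U N : Subgroup G} (hUc : IsCompact (U : Set G))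
    (hNo : IsOpen (N : Set G)) :
    ∃ (n : ℕ) (u : Fin (n+1) → G), u 0 = 1 ∧ (∀ i, u i ∈ U) ∧
      ∀ x ∈ U, ∃ i : Fin (n+1), (u i)⁻¹ * x ∈ N := by
  have hcover : (U : Set G) ⊆ ⋃ g : (U : Set G), (g : G) • (N : Set G) := by
    intro x hx
    exact Set.mem_iUnion.mpr ⟨⟨x, hx⟩, ⟨1, N.one_mem, by simp⟩⟩
  obtain ⟨s, hs⟩ := hUc.elim_finite_subcover (fun g : (U : Set G) => (g : G) • (N : Set G))
    (fun g => hNo.smul _) hcover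
  refine ⟨s.card, Fin.cons 1 (fun i => ((s.equivFin.symm i : (U : Set G)) : G)), Fin.cons_zero _ _, ?_, ?_⟩
  · intro i
    refine Fin.cases ?_ (fun j => ?_) i
    · rw [Fin.cons_zero]; exact U.one_mem
    · rw [Fin.cons_succ]; exact (s.equivFin.symm j : (U : Set G)).2
  · intro x hx
    have := hs hx
    rw [Set.mem_iUnion₂] at this
    obtain ⟨g, hgs, hgx⟩ := this
    refine ⟨(s.equivFin ⟨g, hgs⟩).succ, ?_⟩
    rw [Fin.cons_succ]
    simp only [Equiv.symm_apply_apply]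
    obtain ⟨b, hb, hbx⟩ := hgx
    rw [← hbx]
    simpa using hb

lemma aClosure_le_of_normal [T2Space G] (hP : IsAClassOn G P) {U N : Subgroup G}
    (hUc : IsCompact (U : Set G)) (hNU : N ≤ U) (hNo : IsOpen (N : Set G))
    (hNn : ∀ u ∈ U, ∀ x ∈ N, u * x * u⁻¹ ∈ N) :
    AClosure P N ≤ AClosure P U := by
  rw [aClosure_def P N]
  apply Subgroup.topologicalClosure_minimal
  swap
  · exact Subgroup.isClosed_topologicalClosure _
  apply sSup_le
  intro B hB
  obtain ⟨hBN, hBcl, hBP, hBn⟩ := hB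
  obtain ⟨n, u, hu0, hlU, hlcov⟩ := exists_coset_reps hUc hNo
  have hBn' : ∀ g ∈ N, B.map (MulAut.conj g).toMonoidHom ≤ B :=
    fun g hg => map_conj_le (hBn g hg)
  set Vc : Fin (n+1) → Subgroup G := fun i => B.map (MulAut.conj (u i)).toMonoidHom with hVc
  set C : Subgroup G := ⨆ i, Vc i with hC
  have hVcle : ∀ i, Vc i ≤ N := fun i => map_conj_le fun x hx => hNn _ (hlU i) x (hBN hx)
  have hVcnorm : ∀ i, ∀ g ∈ N, ∀ v ∈ Vc i, g * v * g⁻¹ ∈ Vc i := by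
    intro i g hg
    apply normalizes_of_map_le
    rintro x ⟨y, ⟨b, hb, rfl⟩, rfl⟩
    have hgi : (u i)⁻¹ * g * u i ∈ N := by
      have := hNn (u i)⁻¹ (U.inv_mem (hlU i)) g hg
      rwa [inv_inv] at this
    refine ⟨((u i)⁻¹ * g * u i) * b * ((u i)⁻¹ * g * u i)⁻¹, hBn _ hgi b hb, ?_⟩
    simp only [MulEquiv.coe_toMonoidHom, MulAut.conj_apply]
    group
  have hCN : C ≤ N := iSup_le hVcle
  have hCset : (C : Set G) = AProdSet (n+1) Vc := (AProdSet_eq_sup N (n+1) Vc hVcle hVcnorm).symm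
  have hBcomp : IsCompact (B : Set G) :=
    hUc.of_isClosed_subset hBcl fun x hx => hNU (hBN hx)
  have hVccomp : ∀ i, IsCompact ((Vc i : Subgroup G) : Set G) := by
    intro i
    have : ((Vc i : Subgroup G) : Set G) = (fun x => u i * x * (u i)⁻¹) '' (B : Set G) := by
      rw [hVc, Subgroup.coe_map]
      exact Set.image_congr fun x _ => by simp [MulAut.conj_apply]
    rw [this]
    exact hBcomp.image (by fun_prop)
  have hCmem : C ∈ AGens P U := by
    refine ⟨hCN.trans hNU, ?_, ?_, ?_⟩
    · rw [hCset]; exact (AProdSet_isCompact (n+1) Vc hVccomp).isClosed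
    · exact hP.prod C (n+1) Vc (fun i => hP.conj B hBP _) (fun i => le_iSup Vc i)
        (fun i w hw v hv => hVcnorm i w (hCN hw) v hv) hCset
    · intro g hg
      apply normalizes_of_map_le
      rw [hC, Subgroup.map_iSup]
      refine iSup_le fun i => ?_
      rw [hVc]
      simp only
      rw [Subgroup.map_map, ← conj_hom_mul]
      obtain ⟨j, hj⟩ := hlcov (g * u i) (U.mul_mem hg (hlU i))
      have hgu : g * u i = u j * ((u j)⁻¹ * (g * u i)) := by group
      rw [hgu, conj_hom_mul, ← Subgroup.map_map]
      refine le_trans (Subgroup.map_mono (hBn' _ hj)) ?_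
      exact le_iSup Vc j
  have hBC : B ≤ C := by
    have h1 : B ≤ Vc 0 := by
      intro b hb
      refine ⟨b, hb, ?_⟩
      rw [hu0]
      simp
    exact h1.trans (le_iSup Vc _)
  exact le_trans hBC (le_trans (le_sSup hCmem) (Subgroup.le_topologicalClosure _))

end Main


section MainB
variable {G : Type*} [Group G] [TopologicalSpace G] [IsTopologicalGroup G]
variable {P : Subgroup G → Prop}

lemma aClosure_le [T2Space G] {U : Subgroup G} (hUc : IsCompact (U : Set G)) :
    AClosure P U ≤ U := by
  rw [aClosure_def]
  exact Subgroup.topologicalClosure_minimal _ (sSup_le fun A hA => hA.1) hUc.isClosed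

lemma aClosure_inter_le [T2Space G] (hP : IsAClassOn G P) {U N : Subgroup G}
    (hUc : IsCompact (U : Set G)) (hNU : N ≤ U) (hNo : IsOpen (N : Set G))
    (hNn : ∀ u ∈ U, ∀ x ∈ N, u * x * u⁻¹ ∈ N) :
    ∀ x ∈ AClosure P U, x ∈ N → x ∈ AClosure P N := by
  have hNcl : IsClosed (N : Set G) := N.isClosed_of_isOpen hNo
  intro x hx hxN
  have h1 : (N : Set G) ∩ ((sSup (AGens P U) : Subgroup G) : Set G) ⊆
      ((AClosure P N : Subgroup G) : Set G) := by
    rintro y ⟨hyN, hyS⟩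
    obtain ⟨A, hA, hyA⟩ := (mem_sSup_AGens hP hUc).mp hyS
    obtain ⟨hAU, hAcl, hAP, hAn⟩ := hA
    have hmem : A ⊓ N ∈ AGens P N := by
      refine ⟨inf_le_right, ?_, ?_, ?_⟩
      · rw [Subgroup.coe_inf]; exact hAcl.inter hNcl
      · refine hP.normal_sub A hAP (A ⊓ N) (by rw [Subgroup.coe_inf]; exact hAcl.inter hNcl)
          inf_le_left ?_
        intro l hl m hm
        exact ⟨hAn l (hAU hl) m hm.1, hNn l (hAU hl) m hm.2⟩
      · intro g hg m hm
        exact ⟨hAn g (hNU hg) m hm.1, hNn g (hNU hg) m hm.2⟩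
    exact Subgroup.le_topologicalClosure _ (le_sSup hmem ⟨hyA, hyN⟩)
  have h2 : x ∈ (N : Set G) ∩ closure ((sSup (AGens P U) : Subgroup G) : Set G) := ⟨hxN, hx⟩
  have h3 := hNo.inter_closure h2
  have h4 : closure ((N : Set G) ∩ ((sSup (AGens P U) : Subgroup G) : Set G)) ⊆
      ((AClosure P N : Subgroup G) : Set G) :=
    closure_minimal h1 (Subgroup.isClosed_topologicalClosure _)
  exact h4 h3

lemma aClosure_commensurable_of_normal [T2Space G] (hP : IsAClassOn G P) {U N : Subgroup G}
    (hUc : IsCompact (U : Set G)) (hNU : N ≤ U) (hNo : IsOpen (N : Set G))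
    (hNn : ∀ u ∈ U, ∀ x ∈ N, u * x * u⁻¹ ∈ N) :
    Subgroup.Commensurable (AClosure P U) (AClosure P N) := by
  have hle : AClosure P N ≤ AClosure P U := aClosure_le_of_normal hP hUc hNU hNo hNn
  constructor
  · rw [Subgroup.relIndex_eq_one.mpr hle]
    exact one_ne_zero
  · have hfin : Finite ((AClosure P U : Subgroup G) ⧸
        ((AClosure P N).subgroupOf (AClosure P U))) := by
      obtain ⟨n, u, -, hun, hcov⟩ := exists_coset_reps hUc hNo
      set H := (AClosure P N).subgroupOf (AClosure P U) with hH
      have hUcl : AClosure P U ≤ U := aClosure_le hUc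
      have hrep : ∀ c : (AClosure P U : Subgroup G) ⧸ H,
          ∃ i : Fin (n+1), (u i)⁻¹ * ((Quotient.out c : (AClosure P U : Subgroup G)) : G) ∈ N :=
        fun c => hcov _ (hUcl (Quotient.out c).2)
      choose φ hφ using hrep
      have hinj : Function.Injective φ := by
        intro c₁ c₂ hc
        have h₁ := hφ c₁
        have h₂ := hφ c₂
        rw [hc] at h₁
        set x₁ := (Quotient.out c₁ : (AClosure P U : Subgroup G)) with hx₁
        set x₂ := (Quotient.out c₂ : (AClosure P U : Subgroup G)) with hx₂
        have hN : (x₁ : G)⁻¹ * (x₂ : G) ∈ N := by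
          have := N.mul_mem (N.inv_mem h₁) h₂
          have heq : ((u (φ c₂))⁻¹ * (x₁ : G))⁻¹ * ((u (φ c₂))⁻¹ * (x₂ : G))
              = (x₁ : G)⁻¹ * (x₂ : G) := by group
          rwa [heq] at this
        have hAU : (x₁ : G)⁻¹ * (x₂ : G) ∈ AClosure P U := by
          exact Subgroup.mul_mem _ (Subgroup.inv_mem _ x₁.2) x₂.2
        have hAN : x₁⁻¹ * x₂ ∈ H := by
          rw [hH, Subgroup.mem_subgroupOf]
          exact aClosure_inter_le hP hUc hNU hNo hNn _ hAU hN
        rw [← Quotient.out_eq c₁, ← Quotient.out_eq c₂]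
        exact QuotientGroup.eq.mpr hAN
      exact Finite.of_injective φ hinj
    exact Subgroup.index_ne_zero_of_finite

end MainB


section Core
variable {G : Type*} [Group G] [TopologicalSpace G] [IsTopologicalGroup G]

lemma exists_core {U W : Subgroup G} (hUc : IsCompact (U : Set G)) (hWU : W ≤ U)
    (hWo : IsOpen (W : Set G)) :
    ∃ N : Subgroup G, N ≤ W ∧ IsOpen (N : Set G) ∧ ∀ u ∈ U, ∀ x ∈ N, u * x * u⁻¹ ∈ N := by
  obtain ⟨n, u, hu0, huU, hucov⟩ := exists_coset_reps hUc hWo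
  set N : Subgroup G := ⨅ i : Fin (n+1), W.map (MulAut.conj (u i)).toMonoidHom with hN
  have hmemN : ∀ x, x ∈ N ↔ ∀ i, ∃ w ∈ W, u i * w * (u i)⁻¹ = x := by
    intro x
    rw [hN, Subgroup.mem_iInf]
    refine forall_congr' fun i => ?_
    rw [Subgroup.mem_map]
    refine exists_congr fun w => and_congr_right fun _ => ?_
    simp [MulAut.conj_apply]
  refine ⟨N, ?_, ?_, ?_⟩
  · intro x hx
    obtain ⟨w, hw, hwx⟩ := (hmemN x).mp hx 0
    rw [hu0] at hwx
    have hxw : x = w := by rw [← hwx]; group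
    rwa [hxw]
  · have hcoe : (N : Set G) = ⋂ i : Fin (n+1),
        ((W.map (MulAut.conj (u i)).toMonoidHom : Subgroup G) : Set G) := by
      rw [hN]
      exact Subgroup.coe_iInf
    rw [hcoe]
    apply isOpen_iInter_of_finite
    intro i
    have : ((W.map (MulAut.conj (u i)).toMonoidHom : Subgroup G) : Set G)
        = ((Homeomorph.mulLeft (u i)).trans (Homeomorph.mulRight (u i)⁻¹)) '' (W : Set G) := by
      rw [Subgroup.coe_map]
      exact Set.image_congr fun x _ => by simp [MulAut.conj_apply, mul_assoc]
    rw [this]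
    exact (Homeomorph.isOpenMap _) _ hWo
  · intro g hg x hx
    rw [hmemN]
    intro i
    obtain ⟨j, hj⟩ := hucov (g⁻¹ * u i) (U.mul_mem (U.inv_mem hg) (huU i))
    obtain ⟨w₁, hw₁, hw₁x⟩ := (hmemN x).mp hx j
    set w₀ : G := (u j)⁻¹ * (g⁻¹ * u i) with hw₀
    refine ⟨w₀⁻¹ * w₁ * w₀, W.mul_mem (W.mul_mem (W.inv_mem hj) hw₁) hj, ?_⟩
    have hui : u i = g * (u j * w₀) := by rw [hw₀]; group
    rw [hui, ← hw₁x, hw₀]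
    group

end Core


/-- For any two compact open subgroups `U, V` of a t.d.l.c. group `G`, the subgroups
`[A](U)` and `[A](V)` are commensurate. -/
theorem aClosure_commensurable (G : Type*) [Group G] [TopologicalSpace G]
    [IsTopologicalGroup G] [LocallyCompactSpace G] [TotallyDisconnectedSpace G]
    (P : Subgroup G → Prop) (hP : IsAClassOn G P)
    (U V : Subgroup G) (hUc : IsCompact (U : Set G)) (hUo : IsOpen (U : Set G))
    (hVc : IsCompact (V : Set G)) (hVo : IsOpen (V : Set G)) :
    Subgroup.Commensurable (AClosure P U) (AClosure P V) := by
  have h1 : T1Space G := ⟨fun x => by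
    rw [← (totallyDisconnectedSpace_iff_connectedComponent_singleton.mp ‹_›) x]
    exact isClosed_connectedComponent⟩
  have h2 : T2Space G := by infer_instance
  set W : Subgroup G := U ⊓ V with hW
  have hWo : IsOpen (W : Set G) := by
    rw [hW, Subgroup.coe_inf]; exact hUo.inter hVo
  have hWc : IsCompact (W : Set G) := by
    rw [hW, Subgroup.coe_inf]
    exact hUc.inter_right (V.isClosed_of_isOpen hVo)
  obtain ⟨N₁, hN₁W, hN₁o, hN₁n⟩ := exists_core hUc inf_le_left hWo
  obtain ⟨N₂, hN₂W, hN₂o, hN₂n⟩ := exists_core hVc inf_le_right hWo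
  have hN₁U : N₁ ≤ U := hN₁W.trans inf_le_left
  have hN₂V : N₂ ≤ V := hN₂W.trans inf_le_right
  have c1 : Subgroup.Commensurable (AClosure P U) (AClosure P N₁) :=
    aClosure_commensurable_of_normal hP hUc hN₁U hN₁o hN₁n
  have c2 : Subgroup.Commensurable (AClosure P W) (AClosure P N₁) :=
    aClosure_commensurable_of_normal hP hWc hN₁W hN₁o
      (fun w hw => hN₁n w ((Subgroup.mem_inf.mp hw).1))
  have c3 : Subgroup.Commensurable (AClosure P V) (AClosure P N₂) :=
    aClosure_commensurable_of_normal hP hVc hN₂V hN₂o hN₂n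
  have c4 : Subgroup.Commensurable (AClosure P W) (AClosure P N₂) :=
    aClosure_commensurable_of_normal hP hWc hN₂W hN₂o
      (fun w hw => hN₂n w ((Subgroup.mem_inf.mp hw).2))
  exact ((c1.trans c2.symm).trans c4).trans c3.symm
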